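/- Let F : ℝⁿ → ℝ be twice differentiable with Hessian F'' ≥ ρ·Id for some ρ > 0, and let X : [0,T] → ℝⁿ satisfy Newton's equation Ẍ_t = F''(X_t)F'(X_t). Define φ_t = F'(X_t) + Ẋ_t. Then for all 0 ≤ t ≤ s ≤ T, |φ_s|² ≥ exp(2ρ(s−t))·|φ_t|². -/

import Mathlib

theorem stmt_3 (n : ℕ) (ρ T : ℝ) (hρ : 0 < ρ) (hT : 0 < T)
    (F : EuclideanSpace ℝ (Fin n) → ℝ)
    (F' : EuclideanSpace ℝ (Fin n) → EuclideanSpace ℝ (Fin n))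
    (F'' : EuclideanSpace ℝ (Fin n) → EuclideanSpace ℝ (Fin n) →L[ℝ] EuclideanSpace ℝ (Fin n))
    (hgrad : ∀ x, HasGradientAt F (F' x) x)
    (hhess : ∀ x, HasFDerivAt F' (F'' x) x)
    (hconv : ∀ x v, ρ * ‖v‖ ^ 2 ≤ (inner ℝ (F'' x v) v : ℝ))
    (X X' : ℝ → EuclideanSpace ℝ (Fin n))
    (hX : ∀ t ∈ Set.Icc (0:ℝ) T, HasDerivAt X (X' t) t)
    (hNewton : ∀ t ∈ Set.Icc (0:ℝ) T, HasDerivAt X' (F'' (X t) (F' (X t))) t) :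
    ∀ t s, 0 ≤ t → t ≤ s → s ≤ T →
      Real.exp (2 * ρ * (s - t)) * ‖F' (X t) + X' t‖ ^ 2 ≤ ‖F' (X s) + X' s‖ ^ 2 := by
  set φ : ℝ → EuclideanSpace ℝ (Fin n) := fun t => F' (X t) + X' t with hφ
  have hφder : ∀ t ∈ Set.Icc (0:ℝ) T, HasDerivAt φ (F'' (X t) (φ t)) t := by
    intro t ht
    have h1 : HasDerivAt (fun u => F' (X u)) (F'' (X t) (X' t)) t :=
      (hhess (X t)).comp_hasDerivAt t (hX t ht)
    have h2 := h1.add (hNewton t ht)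
    have : F'' (X t) (X' t) + F'' (X t) (F' (X t)) = F'' (X t) (φ t) := by
      rw [← (F'' (X t)).map_add]; simp [hφ, add_comm]
    rwa [this] at h2
  set g : ℝ → ℝ := fun t => (inner ℝ (φ t) (φ t) : ℝ) with hg
  have hgder : ∀ t ∈ Set.Icc (0:ℝ) T,
      HasDerivAt g (2 * (inner ℝ (F'' (X t) (φ t)) (φ t) : ℝ)) t := by
    intro t ht
    have := (hφder t ht).inner ℝ (hφder t ht)
    have heq : (inner ℝ (φ t) (F'' (X t) (φ t)) : ℝ) + inner ℝ (F'' (X t) (φ t)) (φ t)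
        = 2 * (inner ℝ (F'' (X t) (φ t)) (φ t) : ℝ) := by
      rw [real_inner_comm]; ring
    rwa [heq] at this
  set h : ℝ → ℝ := fun t => Real.exp (-(2 * ρ) * t) * g t with hh
  have hhder : ∀ t ∈ Set.Icc (0:ℝ) T,
      HasDerivAt h ((Real.exp (-(2 * ρ) * t) * (-(2 * ρ) * 1)) * g t
        + Real.exp (-(2 * ρ) * t) * (2 * (inner ℝ (F'' (X t) (φ t)) (φ t) : ℝ))) t := by
    intro t ht
    have he : HasDerivAt (fun u => Real.exp (-(2 * ρ) * u))
        (Real.exp (-(2 * ρ) * t) * (-(2 * ρ) * 1)) t :=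
      ((hasDerivAt_id t).const_mul (-(2 * ρ))).exp
    exact he.mul (hgder t ht)
  have hmono : MonotoneOn h (Set.Icc 0 T) := by
    apply monotoneOn_of_deriv_nonneg (convex_Icc 0 T)
    · exact ContinuousOn.mul (Real.continuous_exp.comp (continuous_mul_left _)).continuousOn
        (fun t ht => ((hgder t ht).continuousAt.continuousWithinAt))
    · intro t ht
      rw [interior_Icc] at ht
      exact ((hhder t (Set.mem_Icc_of_Ioo ht)).differentiableAt).differentiableWithinAt
    · intro t ht
      rw [interior_Icc] at ht
      have ht' : t ∈ Set.Icc (0:ℝ) T := Set.mem_Icc_of_Ioo ht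
      rw [(hhder t ht').deriv]
      have hkey : 2 * ρ * g t ≤ 2 * (inner ℝ (F'' (X t) (φ t)) (φ t) : ℝ) := by
        have := hconv (X t) (φ t)
        have hgt : g t = ‖φ t‖ ^ 2 := real_inner_self_eq_norm_sq (φ t)
        nlinarith
      have hepos : 0 < Real.exp (-(2 * ρ) * t) := Real.exp_pos _
      nlinarith
  intro t s ht hts hsT
  have h1 : h t ≤ h s := hmono ⟨ht, le_trans hts hsT⟩ ⟨le_trans ht hts, hsT⟩ hts
  have hgt : g t = ‖φ t‖ ^ 2 := real_inner_self_eq_norm_sq (φ t)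
  have hgs : g s = ‖φ s‖ ^ 2 := real_inner_self_eq_norm_sq (φ s)
  have key : Real.exp (2 * ρ * s) * (Real.exp (-(2 * ρ) * t) * g t)
      ≤ Real.exp (2 * ρ * s) * (Real.exp (-(2 * ρ) * s) * g s) :=
    mul_le_mul_of_nonneg_left h1 (le_of_lt (Real.exp_pos _))
  have e1 : Real.exp (2 * ρ * s) * (Real.exp (-(2 * ρ) * t) * g t)
      = Real.exp (2 * ρ * (s - t)) * g t := by
    rw [← mul_assoc, ← Real.exp_add, show 2*ρ*s + -(2*ρ)*t = 2*ρ*(s-t) by ring]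
  have e2 : Real.exp (2 * ρ * s) * (Real.exp (-(2 * ρ) * s) * g s) = g s := by
    rw [← mul_assoc, ← Real.exp_add, show 2*ρ*s + -(2*ρ)*s = 0 by ring, Real.exp_zero, one_mul]
  show Real.exp (2 * ρ * (s - t)) * ‖φ t‖ ^ 2 ≤ ‖φ s‖ ^ 2
  rw [← hgt, ← hgs, ← e1, ← e2]
  exact key
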